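/- Let A^1,...,A^m be symmetric n×n real matrices, each extended to a derivation on the exterior algebra Λ*ℝⁿ (i.e. A(ω∧η)=A(ω)∧η+ω∧A(η), agreeing with the matrix action on Λ¹ℝⁿ=ℝⁿ). Then for every p with 0≤p≤n and every ω∈Λᵖℝⁿ, one has Σ_{α=1}^m |A^α ω|² ≤ p² · ‖Σ_{α=1}^m (A^α)²‖_op · |ω|², where ‖·‖_op is the operator norm on ℝⁿ and |·| the standard Euclidean norm on Λᵖℝⁿ. -/

import Mathlib

/-!
**Statement 0.** We model `Λᵖℝⁿ` concretely as alternating `p`-tensors, i.e. functions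
`ω : (Fin p → Fin n) → ℝ` which are antisymmetric under permutations of the arguments
(with respect to the orthonormal basis `e_{i₁} ∧ ⋯ ∧ e_{i_p}`, `i₁ < ⋯ < i_p`, this
gives exactly `Λᵖℝⁿ`, the induced inner product being `⟨ω, η⟩ = (1/p!) Σ_s ω(s)·η(s)`).

A symmetric matrix `A` acts on `Λᵖℝⁿ` as the unique derivation extending its action on
`ℝⁿ = Λ¹ℝⁿ`; in components this is
`(Aω)(i₁,…,i_p) = Σ_k Σ_j A_{i_k j} · ω(i₁,…,j,…,i_p)` (the `j` in the `k`-th slot).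

The claim: for symmetric matrices `A^1, …, A^m`, every `0 ≤ p ≤ n` and every
`ω ∈ Λᵖℝⁿ`, one has `Σ_α |A^α ω|² ≤ p² · ‖Σ_α (A^α)²‖_op · |ω|²`.
-/

/-- An alternating `p`-tensor on `ℝⁿ` (component model of `Λᵖℝⁿ`). -/
def IsAlternatingTensor {n p : ℕ} (ω : (Fin p → Fin n) → ℝ) : Prop :=
  ∀ (s : Fin p → Fin n) (σ : Equiv.Perm (Fin p)),
    ω (s ∘ σ) = ((Equiv.Perm.sign σ : ℤ) : ℝ) * ω s

/-- The derivation extension of a matrix `A` to `p`-tensors, agreeing with the matrix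
action on `Λ¹ℝⁿ = ℝⁿ` and satisfying the Leibniz rule on wedge products. -/
def derivExt {n : ℕ} (A : Matrix (Fin n) (Fin n) ℝ) (p : ℕ)
    (ω : (Fin p → Fin n) → ℝ) : (Fin p → Fin n) → ℝ :=
  fun s => ∑ k : Fin p, ∑ j : Fin n, A (s k) j * ω (Function.update s k j)

/-- The squared norm of a `p`-tensor, induced from the standard inner product of `ℝⁿ`:
the `e_{i₁} ∧ ⋯ ∧ e_{i_p}` with `i₁ < ⋯ < i_p` form an orthonormal basis. -/
noncomputable def tensorNormSq {n p : ℕ} (ω : (Fin p → Fin n) → ℝ) : ℝ :=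
  ((p.factorial : ℝ))⁻¹ * ∑ s : Fin p → Fin n, ω s ^ 2

open Matrix Finset RealInnerProductSpace in
lemma quad_bound {n m : ℕ} (A : Fin m → Matrix (Fin n) (Fin n) ℝ) (hA : ∀ α, (A α).IsSymm)
    (v : Fin n → ℝ) :
    ∑ α : Fin m, ∑ x : Fin n, ((A α).mulVec v x)^2 ≤
      ‖Matrix.toEuclideanCLM (𝕜 := ℝ) (n := Fin n) (∑ α : Fin m, (A α) ^ 2)‖ * ∑ x, (v x)^2 := by
  set B := ∑ α : Fin m, (A α) ^ 2 with hB
  set C := ‖Matrix.toEuclideanCLM (𝕜 := ℝ) (n := Fin n) B‖ with hC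
  have h1 : ∀ α, ∑ x : Fin n, ((A α).mulVec v x)^2 = v ⬝ᵥ (((A α)^2).mulVec v) := by
    intro α
    have h2 : v ⬝ᵥ (((A α)^2).mulVec v) = ((A α).mulVec v) ⬝ᵥ ((A α).mulVec v) := by
      rw [sq, ← Matrix.mulVec_mulVec, Matrix.dotProduct_mulVec, ← Matrix.mulVec_transpose,
        (hA α).eq]
    rw [h2]
    simp [dotProduct, sq]
  simp_rw [h1]
  have h3 : ∑ α : Fin m, v ⬝ᵥ (((A α)^2).mulVec v) = v ⬝ᵥ (B.mulVec v) := by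
    simp [dotProduct, Matrix.mulVec, hB, Matrix.sum_apply, Finset.sum_mul,
      Finset.mul_sum]
    rw [Finset.sum_comm]
    exact Finset.sum_congr rfl fun y _ => Finset.sum_comm
  rw [h3]
  set u : EuclideanSpace ℝ (Fin n) := (WithLp.equiv 2 _).symm v with hu
  have h4 : Matrix.toEuclideanCLM (𝕜 := ℝ) (n := Fin n) B u = (WithLp.equiv 2 _).symm (B.mulVec v) := by
    rw [hu]; rfl
  have h5 : v ⬝ᵥ (B.mulVec v) = ⟪u, Matrix.toEuclideanCLM (𝕜 := ℝ) (n := Fin n) B u⟫ := by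
    rw [h4]
    simp [dotProduct, PiLp.inner_apply, RCLike.inner_apply, hu, WithLp.equiv_symm_apply, mul_comm]
  have h6 : ∑ x, (v x)^2 = ‖u‖^2 := by
    rw [← real_inner_self_eq_norm_sq]
    rw [hu, WithLp.equiv_symm_apply, PiLp.inner_apply]
    simp only [RCLike.inner_apply, conj_trivial, PiLp.toLp_apply, sq]
  rw [h5, h6]
  calc ⟪u, Matrix.toEuclideanCLM (𝕜 := ℝ) (n := Fin n) B u⟫
      ≤ ‖u‖ * ‖Matrix.toEuclideanCLM (𝕜 := ℝ) (n := Fin n) B u‖ := real_inner_le_norm _ _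
    _ ≤ ‖u‖ * (C * ‖u‖) := by
        gcongr
        exact (Matrix.toEuclideanCLM (𝕜 := ℝ) (n := Fin n) B).le_opNorm u
    _ = C * ‖u‖^2 := by ring

open Matrix Finset RealInnerProductSpace in
lemma slot_bound (n m p : ℕ) (A : Fin m → Matrix (Fin n) (Fin n) ℝ) (hA : ∀ α, (A α).IsSymm)
    (ω : (Fin p → Fin n) → ℝ) (k : Fin p) :
    ∑ α : Fin m, ∑ s : Fin p → Fin n,
        (∑ j : Fin n, A α (s k) j * ω (Function.update s k j))^2 ≤
      ‖Matrix.toEuclideanCLM (𝕜 := ℝ) (n := Fin n) (∑ α : Fin m, (A α) ^ 2)‖ *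
        ∑ s : Fin p → Fin n, ω s ^ 2 := by
  set C := ‖Matrix.toEuclideanCLM (𝕜 := ℝ) (n := Fin n) (∑ α : Fin m, (A α) ^ 2)‖ with hC
  set e := Equiv.funSplitAt k (Fin n) with he
  have hupd : ∀ (q : Fin n × ({ j // j ≠ k } → Fin n)) (j : Fin n),
      Function.update (e.symm q) k j = e.symm (j, q.2) := by
    intro q j
    funext l
    rcases eq_or_ne l k with h | h
    · subst h; simp [he]
    · simp [Function.update_of_ne h, he, h]
  have hk : ∀ (q : Fin n × ({ j // j ≠ k } → Fin n)), e.symm q k = q.1 := by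
    intro q; simp [he]
  have key : ∀ (F : (Fin p → Fin n) → ℝ), ∑ s : Fin p → Fin n, F s =
      ∑ g : { j // j ≠ k } → Fin n, ∑ x : Fin n, F (e.symm (x, g)) := by
    intro F
    rw [← Equiv.sum_comp e.symm F, Fintype.sum_prod_type, Finset.sum_comm]
  -- rewrite both sides using the splitting
  have lhs_eq : ∀ α, ∑ s : Fin p → Fin n,
      (∑ j : Fin n, A α (s k) j * ω (Function.update s k j))^2 =
      ∑ g : { j // j ≠ k } → Fin n, ∑ x : Fin n,
        ((A α).mulVec (fun j => ω (e.symm (j, g))) x)^2 := by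
    intro α
    rw [key]
    refine Finset.sum_congr rfl fun g _ => Finset.sum_congr rfl fun x _ => ?_
    congr 1
    rw [hk]
    refine Finset.sum_congr rfl fun j _ => ?_
    rw [hupd]
  simp_rw [lhs_eq]
  rw [Finset.sum_comm, key (fun s => ω s ^ 2)]
  rw [Finset.mul_sum]
  refine Finset.sum_le_sum fun g _ => ?_
  exact quad_bound A hA fun j => ω (e.symm (j, g))

theorem sum_normSq_derivExt_le (n m p : ℕ) (hp : p ≤ n)
    (A : Fin m → Matrix (Fin n) (Fin n) ℝ) (hA : ∀ α, (A α).IsSymm)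
    (ω : (Fin p → Fin n) → ℝ) (hω : IsAlternatingTensor ω) :
    ∑ α : Fin m, tensorNormSq (derivExt (A α) p ω) ≤
      (p : ℝ) ^ 2 * ‖Matrix.toEuclideanCLM (𝕜 := ℝ) (n := Fin n) (∑ α : Fin m, (A α) ^ 2)‖ *
        tensorNormSq ω := by
  set C := ‖Matrix.toEuclideanCLM (𝕜 := ℝ) (n := Fin n) (∑ α : Fin m, (A α) ^ 2)‖ with hC
  have hCnn : 0 ≤ C := norm_nonneg _
  have hfac : (0:ℝ) ≤ ((p.factorial : ℝ))⁻¹ := by positivity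
  unfold tensorNormSq derivExt
  rw [← Finset.mul_sum]
  have step1 : ∑ α : Fin m, ∑ s : Fin p → Fin n,
      (∑ k : Fin p, ∑ j : Fin n, A α (s k) j * ω (Function.update s k j))^2 ≤
      (p:ℝ) * ∑ k : Fin p, ∑ α : Fin m, ∑ s : Fin p → Fin n,
        (∑ j : Fin n, A α (s k) j * ω (Function.update s k j))^2 := by
    rw [Finset.mul_sum]
    have := fun (α : Fin m) (s : Fin p → Fin n) =>
      sq_sum_le_card_mul_sum_sq
        (s := Finset.univ) (f := fun k : Fin p => ∑ j : Fin n, A α (s k) j * ω (Function.update s k j))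
    calc ∑ α : Fin m, ∑ s : Fin p → Fin n,
          (∑ k : Fin p, ∑ j : Fin n, A α (s k) j * ω (Function.update s k j))^2
        ≤ ∑ α : Fin m, ∑ s : Fin p → Fin n, (p:ℝ) * ∑ k : Fin p,
            (∑ j : Fin n, A α (s k) j * ω (Function.update s k j))^2 := by
          refine Finset.sum_le_sum fun α _ => Finset.sum_le_sum fun s _ => ?_
          simpa using this α s
      _ = ∑ k : Fin p, (p:ℝ) * ∑ α : Fin m, ∑ s : Fin p → Fin n,
            (∑ j : Fin n, A α (s k) j * ω (Function.update s k j))^2 := by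
          simp_rw [Finset.mul_sum]
          have reorder : ∀ (f : Fin m → (Fin p → Fin n) → Fin p → ℝ),
              ∑ α : Fin m, ∑ s : Fin p → Fin n, ∑ k : Fin p, f α s k =
                ∑ k : Fin p, ∑ α : Fin m, ∑ s : Fin p → Fin n, f α s k := by
            intro f
            calc ∑ α : Fin m, ∑ s : Fin p → Fin n, ∑ k : Fin p, f α s k
                = ∑ α : Fin m, ∑ k : Fin p, ∑ s : Fin p → Fin n, f α s k :=
                  Finset.sum_congr rfl fun α _ => Finset.sum_comm
              _ = ∑ k : Fin p, ∑ α : Fin m, ∑ s : Fin p → Fin n, f α s k := Finset.sum_comm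
          exact reorder fun α s k =>
            (p:ℝ) * (∑ j : Fin n, A α (s k) j * ω (Function.update s k j))^2
  have step2 : ∑ k : Fin p, ∑ α : Fin m, ∑ s : Fin p → Fin n,
      (∑ j : Fin n, A α (s k) j * ω (Function.update s k j))^2 ≤
      (p:ℝ) * (C * ∑ s : Fin p → Fin n, ω s ^ 2) := by
    calc ∑ k : Fin p, ∑ α : Fin m, ∑ s : Fin p → Fin n,
          (∑ j : Fin n, A α (s k) j * ω (Function.update s k j))^2
        ≤ ∑ _k : Fin p, C * ∑ s : Fin p → Fin n, ω s ^ 2 :=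
          Finset.sum_le_sum fun k _ => slot_bound n m p A hA ω k
      _ = (p:ℝ) * (C * ∑ s : Fin p → Fin n, ω s ^ 2) := by simp [mul_comm]
  calc ((p.factorial : ℝ))⁻¹ * ∑ α : Fin m, ∑ s : Fin p → Fin n,
        (∑ k : Fin p, ∑ j : Fin n, A α (s k) j * ω (Function.update s k j))^2
      ≤ ((p.factorial : ℝ))⁻¹ * ((p:ℝ) * ((p:ℝ) * (C * ∑ s : Fin p → Fin n, ω s ^ 2))) := by
        refine mul_le_mul_of_nonneg_left ?_ hfac
        refine le_trans step1 ?_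
        have hpnn : (0:ℝ) ≤ (p:ℝ) := by positivity
        exact mul_le_mul_of_nonneg_left step2 hpnn
    _ = (p : ℝ) ^ 2 * C * (((p.factorial : ℝ))⁻¹ * ∑ s : Fin p → Fin n, ω s ^ 2) := by ring
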